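/- Let U be an unbalanced critical two-dimensional update family with constant κ := 3ν. Let K ⊆ ℤ² be a finite set with 2 ≤ |K| < ∞ such that [K] is strongly connected. Then there exists a partition K = K₁ ∪ K₂ into nonempty disjoint sets such that [K₁], [K₂] and [K₁] ∪ [K₂] are all strongly connected. -/

import Mathlib

open MeasureTheory Filter Set

namespace BP

/-- A site of the two-dimensional lattice `ℤ²`. -/
abbrev Site := ℤ × ℤ

/-- One step of the `U`-bootstrap process: a site becomes infected if some update rule,
translated by it, is already entirely infected. -/
def step (U : Finset (Finset Site)) (A : Set Site) : Set Site :=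
  A ∪ {x : Site | ∃ X ∈ U, ∀ y ∈ X, x + y ∈ A}

/-- The sets `A_t` of the `U`-bootstrap process. -/
def iter (U : Finset (Finset Site)) (A : Set Site) : ℕ → Set Site
  | 0 => A
  | t + 1 => step U (iter U A t)

/-- The closure `[A]` of `A` under the `U`-bootstrap process. -/
def bclosure (U : Finset (Finset Site)) (A : Set Site) : Set Site :=
  ⋃ t : ℕ, iter U A t

/-- The inner product of a site with a real vector. -/
noncomputable def ip (x : Site) (u : ℝ × ℝ) : ℝ := (x.1 : ℝ) * u.1 + (x.2 : ℝ) * u.2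

/-- The inner product of two real vectors. -/
noncomputable def ipR (v w : ℝ × ℝ) : ℝ := v.1 * w.1 + v.2 * w.2

/-- `u` is a unit vector, i.e. an element of `S¹`. -/
def unitVec (u : ℝ × ℝ) : Prop := u.1 ^ 2 + u.2 ^ 2 = 1

/-- The discrete half-plane `H_u = {x : ⟨x,u⟩ < 0}`. -/
def halfPlane (u : ℝ × ℝ) : Set Site := {x : Site | ip x u < 0}

/-- `u` is a stable direction for `U`: the half-plane `H_u` is closed under the process. -/
def IsStable (U : Finset (Finset Site)) (u : ℝ × ℝ) : Prop :=
  bclosure U (halfPlane u) = halfPlane u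

/-- The stable set `S = S(U)`, as a set of unit vectors. -/
def stableSet (U : Finset (Finset Site)) : Set (ℝ × ℝ) :=
  {u | unitVec u ∧ IsStable U u}

/-- The discrete line `ℓ_u` through the origin perpendicular to `u`. -/
def line (u : ℝ × ℝ) : Set Site := {x | ip x u = 0}

/-- The perpendicular vector pointing to the right as one looks in the direction `u`. -/
def rightPerp (u : ℝ × ℝ) : ℝ × ℝ := (u.2, -u.1)

/-- `ℓ_u⁺`: the origin together with the sites of `ℓ_u` to the right of the origin
(as one looks in the direction `u`). -/
def linePlus (u : ℝ × ℝ) : Set Site := {x | ip x u = 0 ∧ 0 ≤ ip x (rightPerp u)}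

/-- `ℓ_u⁻`: the origin together with the sites of `ℓ_u` to the left of the origin. -/
def lineMinus (u : ℝ × ℝ) : Set Site := {x | ip x u = 0 ∧ ip x (rightPerp u) ≤ 0}

/-- `α⁺(u)`: the minimum cardinality of a finite set `Z ⊆ ℤ²` such that `[H_u ∪ Z]`
contains infinitely many sites of `ℓ_u⁺` (and `⊤ = ∞` if there is no such set). -/
noncomputable def alphaPlus (U : Finset (Finset Site)) (u : ℝ × ℝ) : ℕ∞ :=
  sInf {n : ℕ∞ | ∃ Z : Finset Site, (Z.card : ℕ∞) = n ∧
    (bclosure U (halfPlane u ∪ ↑Z) ∩ linePlus u).Infinite}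

/-- `α⁻(u)`: as `α⁺(u)`, but for `ℓ_u⁻`. -/
noncomputable def alphaMinus (U : Finset (Finset Site)) (u : ℝ × ℝ) : ℕ∞ :=
  sInf {n : ℕ∞ | ∃ Z : Finset Site, (Z.card : ℕ∞) = n ∧
    (bclosure U (halfPlane u ∪ ↑Z) ∩ lineMinus u).Infinite}

/-- The difficulty `α(u)` of a direction `u`: `min {α⁺(u), α⁻(u)}` if both are finite,
and `∞` otherwise. -/
noncomputable def difficulty (U : Finset (Finset Site)) (u : ℝ × ℝ) : ℕ∞ :=
  if alphaPlus U u ≠ ⊤ ∧ alphaMinus U u ≠ ⊤ then min (alphaPlus U u) (alphaMinus U u)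
  else ⊤

/-- `ᾱ(u) = min {α⁺(u), α⁻(u)}`. -/
noncomputable def alphaBar (U : Finset (Finset Site)) (u : ℝ × ℝ) : ℕ∞ :=
  min (alphaPlus U u) (alphaMinus U u)

/-- The difficulty `α = α(U)` of the update family `U`: the minimum over open
semicircles `C` of the maximum of `α(u)` over `u ∈ C`.  (An open semicircle is
parametrised by its midpoint `w`.) -/
noncomputable def famDifficulty (U : Finset (Finset Site)) : ℕ∞ :=
  ⨅ (w : ℝ × ℝ) (_ : unitVec w),
    ⨆ (u : ℝ × ℝ) (_ : unitVec u) (_ : 0 < ipR u w), difficulty U u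

/-- `U` is critical: some (closed) semicircle has finite intersection with the stable
set, and every open semicircle meets the stable set. -/
def Critical (U : Finset (Finset Site)) : Prop :=
  (∃ w : ℝ × ℝ, unitVec w ∧ (stableSet U ∩ {u | 0 ≤ ipR u w}).Finite) ∧
  (∀ w : ℝ × ℝ, unitVec w → (stableSet U ∩ {u | 0 < ipR u w}).Nonempty)

/-- The balancedness condition: some closed semicircle `C` has `α(u) ≤ α(U)`
for every `u ∈ C`.  A critical family is balanced iff this holds, unbalanced otherwise. -/
def BalancedCond (U : Finset (Finset Site)) : Prop :=
  ∃ w : ℝ × ℝ, unitVec w ∧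
    ∀ u : ℝ × ℝ, unitVec u → 0 ≤ ipR u w → difficulty U u ≤ famDifficulty U

/-- The time `τ` at which the origin is infected (`⊤ = ∞` if it never is). -/
noncomputable def tau (U : Finset (Finset Site)) (A : Set Site) : ℕ∞ :=
  ⨅ (t : ℕ) (_ : (0 : Site) ∈ iter U A t), (t : ℕ∞)

/-- Configurations of initially infected sites in the plane. -/
abbrev Config := Site → Bool

/-- The set of initially infected sites of a configuration. -/
def initSet (ω : Config) : Set Site := {x | ω x = true}

/-- `μ` is the product Bernoulli(`p`) measure (law of a "`p`-random set"): a probability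
measure giving every cylinder event its product probability. -/
def IsBernoulliProduct {ι : Type*} (p : ℝ) (μ : Measure (ι → Bool)) : Prop :=
  IsProbabilityMeasure μ ∧
    ∀ S : Finset ι, ∀ f : ι → Bool,
      μ {ω | ∀ x ∈ S, ω x = f x} =
        ∏ x ∈ S, if f x then ENNReal.ofReal p else ENNReal.ofReal (1 - p)

/-- Reduction of a site modulo `n`, giving a point of the torus `ℤ_n²`. -/
def projT (n : ℕ) (y : Site) : ZMod n × ZMod n := ((y.1 : ZMod n), (y.2 : ZMod n))

/-- One step of the `U`-bootstrap process on the torus `ℤ_n²`. -/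
def stepT (n : ℕ) (U : Finset (Finset Site)) (A : Set (ZMod n × ZMod n)) :
    Set (ZMod n × ZMod n) :=
  A ∪ {x | ∃ X ∈ U, ∀ y ∈ X, x + projT n y ∈ A}

/-- The sets `A_t` of the `U`-bootstrap process on the torus. -/
def iterT (n : ℕ) (U : Finset (Finset Site)) (A : Set (ZMod n × ZMod n)) :
    ℕ → Set (ZMod n × ZMod n)
  | 0 => A
  | t + 1 => stepT n U (iterT n U A t)

/-- The closure of `A` under the `U`-bootstrap process on the torus. -/
def bclosureT (n : ℕ) (U : Finset (Finset Site)) (A : Set (ZMod n × ZMod n)) :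
    Set (ZMod n × ZMod n) :=
  ⋃ t : ℕ, iterT n U A t

/-- `A` percolates on the torus `ℤ_n²`. -/
def PercolatesT (n : ℕ) (U : Finset (Finset Site)) (A : Set (ZMod n × ZMod n)) : Prop :=
  bclosureT n U A = Set.univ

/-- The critical probability `p_c(ℤ_n², U)`, where `P` is the family of product
Bernoulli measures on subsets of the torus. -/
noncomputable def pcT (n : ℕ) (U : Finset (Finset Site))
    (P : ℝ → Measure ((ZMod n × ZMod n) → Bool)) : ℝ :=
  sInf {p : ℝ | p ∈ Set.Icc (0 : ℝ) 1 ∧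
    1 / 2 ≤ P p {ω | PercolatesT n U {x | ω x = true}}}

/-- The Euclidean (`ℓ₂`) distance between two sites. -/
noncomputable def dist2 (x y : Site) : ℝ :=
  Real.sqrt ((((x.1 - y.1 : ℤ) : ℝ)) ^ 2 + (((x.2 - y.2 : ℤ) : ℝ)) ^ 2)

/-- A set of sites is (strongly) connected in the graph `G_κ` joining sites at
Euclidean distance at most `κ`. -/
def Conn (κ : ℝ) (S : Set Site) : Prop :=
  ∀ x ∈ S, ∀ y ∈ S,
    Relation.ReflTransGen (fun a b : Site => b ∈ S ∧ dist2 a b ≤ κ) x y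

/-- The range `ν` of the update family:
`ν = max {‖x − y‖₂ : x, y ∈ X ∪ {0}, X ∈ U}`. -/
noncomputable def nu (U : Finset (Finset Site)) : ℝ :=
  sSup {d : ℝ | ∃ X ∈ U, ∃ x ∈ insert (0 : Site) X, ∃ y ∈ insert (0 : Site) X,
    d = dist2 x y}

/-- The diameter of a set of sites. -/
noncomputable def diam2 (K : Set Site) : ℝ :=
  sSup {d : ℝ | ∃ x ∈ K, ∃ y ∈ K, d = dist2 x y}

/-- The projection `π(K, u) = max {|⟨x − y, u⟩| : x, y ∈ K}`. -/
noncomputable def proj (K : Set Site) (u : ℝ × ℝ) : ℝ :=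
  sSup {d : ℝ | ∃ x ∈ K, ∃ y ∈ K, d = |ip x u - ip y u|}

/-- A `T`-droplet: a nonempty intersection of translated half-planes `H_u + a_u`,
`u ∈ T`. -/
def IsDroplet (T : Set (ℝ × ℝ)) (D : Set Site) : Prop :=
  D.Nonempty ∧ ∃ a : (ℝ × ℝ) → Site, D = ⋂ u ∈ T, {x : Site | ip (x - a u) u < 0}

/-- `D` is the smallest `T`-droplet containing `K`. -/
def IsMinDroplet (T : Set (ℝ × ℝ)) (K D : Set Site) : Prop :=
  IsDroplet T D ∧ K ⊆ D ∧ ∀ D' : Set Site, IsDroplet T D' → K ⊆ D' → D ⊆ D'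

/-- An `a`-cluster: a strongly connected set of `a` sites. -/
def IsCluster (κ : ℝ) (a : ℕ) (B : Finset Site) : Prop :=
  B.card = a ∧ Conn κ ↑B

/-- One step of the `α`-covering algorithm: two droplets of the current collection lying
within strong-connectivity reach of a common translate of `D̂` are replaced by the
smallest `S_B`-droplet containing their union. -/
inductive CoverStep (SB : Set (ℝ × ℝ)) (κ : ℝ) (Dhat : Set Site) :
    Multiset (Set Site) → Multiset (Set Site) → Prop
  | merge (rest : Multiset (Set Site)) (D₁ D₂ D' : Set Site) (x : Site) :
      Conn κ (D₁ ∪ D₂ ∪ ((fun z => z + x) '' Dhat)) →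
      IsMinDroplet SB (D₁ ∪ D₂) D' →
      CoverStep SB κ Dhat (D₁ ::ₘ D₂ ::ₘ rest) (D' ::ₘ rest)

/-- `𝒟` is an `α`-cover of `K`: a possible output of the `α`-covering algorithm, started
from a maximal collection of pairwise disjoint `a`-clusters of `K`, each contained in a
translate of `D̂`. -/
def IsAlphaCover (κ : ℝ) (a : ℕ) (SB : Set (ℝ × ℝ)) (Dhat : Set Site)
    (K : Set Site) (𝒟 : Multiset (Set Site)) : Prop :=
  ∃ B : List (Finset Site), ∃ c : List Site,
    B.length = c.length ∧
    (∀ Bi ∈ B, IsCluster κ a Bi ∧ ↑Bi ⊆ K) ∧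
    B.Pairwise (fun B₁ B₂ => Disjoint B₁ B₂) ∧
    (∀ B' : Finset Site, IsCluster κ a B' → ↑B' ⊆ K → ∃ Bi ∈ B, ¬ Disjoint B' Bi) ∧
    (∀ i : ℕ, ∀ h₁ : i < B.length, ∀ h₂ : i < c.length,
      ↑(B.get ⟨i, h₁⟩) ⊆ (fun z => z + c.get ⟨i, h₂⟩) '' Dhat) ∧
    Relation.ReflTransGen (CoverStep SB κ Dhat)
      ↑(c.map fun v => (fun z => z + v) '' Dhat) 𝒟

/-- The droplet `D` is `α`-covered (with respect to the initial set `A`). -/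
def AlphaCovered (κ : ℝ) (a : ℕ) (SB : Set (ℝ × ℝ)) (Dhat : Set Site)
    (A D : Set Site) : Prop :=
  IsAlphaCover κ a SB Dhat (D ∩ A) {D}

/-- The constant `ρ` used for balanced families:
`ρ = max {‖y − Z‖₂ : u ∈ S_B, |Z| = α − 1, y ∈ [H_u ∪ Z] ∖ H_u}`. -/
noncomputable def rho (U : Finset (Finset Site)) (SB : Set (ℝ × ℝ)) (a : ℕ) : ℝ :=
  sSup {d : ℝ | ∃ u ∈ SB, ∃ Z : Finset Site, Z.card = a - 1 ∧
    ∃ y ∈ bclosure U (halfPlane u ∪ ↑Z) \ halfPlane u,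
      d = sInf {r : ℝ | ∃ z ∈ Z, r = dist2 y z}}

/-- The connectivity constant `κ = 2(ρ + ν)` for balanced families. -/
noncomputable def kappaB (U : Finset (Finset Site)) (SB : Set (ℝ × ℝ)) (a : ℕ) : ℝ :=
  2 * (rho U SB a + nu U)

/-- A valid choice of the finite set `S_B` of stable directions for a balanced family:
`ᾱ(u) ≥ α` for all `u ∈ S_B`, and `S_B` meets every open semicircle. -/
def ValidSB (U : Finset (Finset Site)) (a : ℕ) (SB : Set (ℝ × ℝ)) : Prop :=
  SB.Finite ∧ SB ⊆ stableSet U ∧ (∀ u ∈ SB, (a : ℕ∞) ≤ alphaBar U u) ∧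
  ∀ w : ℝ × ℝ, unitVec w → ∃ u ∈ SB, 0 < ipR u w

/-- `D` is internally spanned by `A`: some strongly connected subset `L` of `[D ∩ A]`
has `D` as the smallest `T`-droplet containing it. -/
def InternallySpanned (U : Finset (Finset Site)) (T : Set (ℝ × ℝ)) (κ : ℝ)
    (A D : Set Site) : Prop :=
  ∃ L : Set Site, L ⊆ bclosure U (D ∩ A) ∧ Conn κ L ∧ IsMinDroplet T L D

/-- A valid choice of the set `S_U = {u*, −u*, u^l, u^r}` of stable directions for an
unbalanced family: `min {α(u*), α(−u*)} ≥ α + 1`, `u^l` (resp. `u^r`) lies in the open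
semicircle to the left (resp. right) of `u*`, and `min {ᾱ(u^l), ᾱ(u^r)} = α`. -/
def ValidSU (U : Finset (Finset Site)) (a : ℕ) (ustar ul ur : ℝ × ℝ) : Prop :=
  ustar ∈ stableSet U ∧ -ustar ∈ stableSet U ∧ ul ∈ stableSet U ∧ ur ∈ stableSet U ∧
  (a : ℕ∞) + 1 ≤ difficulty U ustar ∧ (a : ℕ∞) + 1 ≤ difficulty U (-ustar) ∧
  0 < ipR ul (-ustar.2, ustar.1) ∧ 0 < ipR ur (ustar.2, -ustar.1) ∧
  min (alphaBar U ul) (alphaBar U ur) = (a : ℕ∞)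

/-- The point of `S¹` at angle `θ`. -/
noncomputable def circlePt (θ : ℝ) : ℝ × ℝ := (Real.cos θ, Real.sin θ)

/-- `u` is a rational direction: it is parallel to a nonzero integer vector,
i.e. it has rational or infinite slope. -/
def RationalDir (u : ℝ × ℝ) : Prop :=
  ∃ x : Site, x ≠ 0 ∧ (x.1 : ℝ) * u.2 = (x.2 : ℝ) * u.1

/-- The closed arc of directions from `u` to `v` (anticlockwise). -/
def arcFrom (u v : ℝ × ℝ) : Set (ℝ × ℝ) :=
  {w | ∃ θ₁ θ₂ θ : ℝ, circlePt θ₁ = u ∧ circlePt θ₂ = v ∧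
    θ₁ ≤ θ₂ ∧ θ₂ < θ₁ + 2 * Real.pi ∧ θ ∈ Set.Icc θ₁ θ₂ ∧ circlePt θ = w}

/-- `u` and `v` are consecutive elements of `T`:
`u ≠ v` and `T ∩ [u, v] = {u, v}`. -/
def ConsecutiveIn (T : Set (ℝ × ℝ)) (u v : ℝ × ℝ) : Prop :=
  u ≠ v ∧ T ∩ arcFrom u v = {u, v}

section SplitProof

variable {U : Finset (Finset Site)}

lemma step_mono' {A B : Set Site} (h : A ⊆ B) : step U A ⊆ step U B := by
  intro x hx
  rcases hx with hx | ⟨X, hX, hx⟩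
  · exact Or.inl (h hx)
  · exact Or.inr ⟨X, hX, fun y hy => h (hx y hy)⟩

lemma subset_step' (A : Set Site) : A ⊆ step U A := Set.subset_union_left

lemma iter_mono_t (A : Set Site) {s t : ℕ} (h : s ≤ t) : iter U A s ⊆ iter U A t := by
  induction t with
  | zero =>
    have : s = 0 := Nat.le_zero.mp h
    subst this; exact subset_rfl
  | succ t ih =>
    rcases Nat.lt_or_ge s (t+1) with h' | h'
    · exact (ih (Nat.lt_succ_iff.mp h')).trans (subset_step' _)
    · have : s = t+1 := le_antisymm h h'
      subst this; exact subset_rfl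

lemma subset_bclosure' (A : Set Site) : A ⊆ bclosure U A :=
  Set.subset_iUnion (iter U A) 0

lemma iter_subset_bclosure (A : Set Site) (t : ℕ) : iter U A t ⊆ bclosure U A :=
  Set.subset_iUnion _ t

lemma mem_bclosure' {A : Set Site} {x : Site} :
    x ∈ bclosure U A ↔ ∃ t, x ∈ iter U A t := Set.mem_iUnion

lemma bclosure_mono' {A B : Set Site} (h : A ⊆ B) : bclosure U A ⊆ bclosure U B := by
  intro x hx
  rcases mem_bclosure'.mp hx with ⟨t, ht⟩
  have key : ∀ t, iter U A t ⊆ iter U B t := by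
    intro t; induction t with
    | zero => exact h
    | succ t ih => exact step_mono' ih
  exact iter_subset_bclosure B t (key t ht)

lemma step_bclosure (A : Set Site) : step U (bclosure U A) ⊆ bclosure U A := by
  intro x hx
  rcases hx with hx | ⟨X, hX, hx⟩
  · exact hx
  · have key : ∀ Y : Finset Site, (∀ y ∈ Y, x + y ∈ bclosure U A) →
        ∃ t, ∀ y ∈ Y, x + y ∈ iter U A t := by
      intro Y
      induction Y using Finset.induction_on with
      | empty => intro _; exact ⟨0, by simp⟩
      | insert a s hni ih =>
        intro h
        obtain ⟨t₁, ht₁⟩ := ih fun y hy => h y (Finset.mem_insert_of_mem hy)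
        obtain ⟨t₂, ht₂⟩ := mem_bclosure'.mp (h a (Finset.mem_insert_self a s))
        refine ⟨max t₁ t₂, ?_⟩
        intro y hy
        rcases Finset.mem_insert.mp hy with rfl | hy
        · exact iter_mono_t A (le_max_right _ _) ht₂
        · exact iter_mono_t A (le_max_left _ _) (ht₁ y hy)
    obtain ⟨t, ht⟩ := key X hx
    exact iter_subset_bclosure A (t+1) (Or.inr ⟨X, hX, ht⟩)

lemma bclosure_subset_of_closed {A W : Set Site} (hAW : A ⊆ W)
    (hW : step U W ⊆ W) : bclosure U A ⊆ W := by
  intro x hx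
  rcases mem_bclosure'.mp hx with ⟨t, ht⟩
  have key : ∀ t, iter U A t ⊆ W := by
    intro t; induction t with
    | zero => exact hAW
    | succ t ih => exact (step_mono' ih).trans hW
  exact key t ht

lemma bclosure_union_closures (S T : Set Site) :
    bclosure U (bclosure U S ∪ bclosure U T) = bclosure U (S ∪ T) := by
  apply Set.Subset.antisymm
  · exact bclosure_subset_of_closed
      (Set.union_subset (bclosure_mono' Set.subset_union_left)
        (bclosure_mono' Set.subset_union_right))
      (step_bclosure _)
  · exact bclosure_mono' (Set.union_subset
      ((subset_bclosure' S).trans Set.subset_union_left)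
      ((subset_bclosure' T).trans Set.subset_union_right))

lemma dist2_self (x : Site) : dist2 x x = 0 := by
  simp [dist2]

lemma dist2_comm (x y : Site) : dist2 x y = dist2 y x := by
  unfold dist2
  congr 1
  push_cast
  ring

lemma dist2_add_left (x y z : Site) : dist2 (x + y) (x + z) = dist2 y z := by
  unfold dist2
  congr 1
  simp only [Prod.fst_add, Prod.snd_add]
  push_cast
  ring

lemma nuSet_finite (U : Finset (Finset Site)) :
    {d : ℝ | ∃ X ∈ U, ∃ x ∈ insert (0 : Site) X, ∃ y ∈ insert (0 : Site) X,
      d = dist2 x y}.Finite := by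
  have he : {d : ℝ | ∃ X ∈ U, ∃ x ∈ insert (0 : Site) X, ∃ y ∈ insert (0 : Site) X,
      d = dist2 x y} = ⋃ X ∈ (U : Set (Finset Site)),
        ⋃ x ∈ ((insert (0 : Site) X : Finset Site) : Set Site),
          ⋃ y ∈ ((insert (0 : Site) X : Finset Site) : Set Site), {dist2 x y} := by
    ext d
    simp only [Set.mem_setOf_eq, Set.mem_iUnion, Set.mem_singleton_iff, Finset.mem_coe,
      exists_prop]
  rw [he]
  exact Set.Finite.biUnion U.finite_toSet fun X _ =>
    Set.Finite.biUnion (insert (0 : Site) X).finite_toSet fun x _ =>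
      Set.Finite.biUnion (insert (0 : Site) X).finite_toSet fun y _ =>
        Set.finite_singleton _

lemma dist2_le_nu {X : Finset Site} (hX : X ∈ U) {x y : Site}
    (hx : x ∈ insert (0 : Site) X) (hy : y ∈ insert (0 : Site) X) :
    dist2 x y ≤ nu U :=
  le_csSup (nuSet_finite U).bddAbove ⟨X, hX, x, hx, y, hy, rfl⟩

lemma nu_nonneg (U : Finset (Finset Site)) : 0 ≤ nu U := by
  rcases U.eq_empty_or_nonempty with rfl | ⟨X, hX⟩
  · have he : {d : ℝ | ∃ X ∈ (∅ : Finset (Finset Site)), ∃ x ∈ insert (0 : Site) X,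
        ∃ y ∈ insert (0 : Site) X, d = dist2 x y} = ∅ := by simp
    unfold nu
    rw [he, Real.sSup_empty]
  · have h := dist2_le_nu (U := U) hX (Finset.mem_insert_self _ _)
      (Finset.mem_insert_self _ _)
    rwa [dist2_self] at h

lemma conn_mono {κ : ℝ} {S T : Set Site} (hST : S ⊆ T) {x y : Site}
    (h : Relation.ReflTransGen (fun a b : Site => b ∈ S ∧ dist2 a b ≤ κ) x y) :
    Relation.ReflTransGen (fun a b : Site => b ∈ T ∧ dist2 a b ≤ κ) x y :=
  by
    induction h with
    | refl => exact .refl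
    | tail _ hab ih => exact ih.tail ⟨hST hab.1, hab.2⟩

lemma conn_union_of_close {κ : ℝ} {S T : Set Site} (hS : Conn κ S) (hT : Conn κ T)
    {p q : Site} (hp : p ∈ S) (hq : q ∈ T) (hpq : dist2 p q ≤ κ) :
    Conn κ (S ∪ T) := by
  have hqp : dist2 q p ≤ κ := by rwa [dist2_comm] at hpq
  intro x hx y hy
  have bridge₁ : Relation.ReflTransGen
      (fun a b : Site => b ∈ S ∪ T ∧ dist2 a b ≤ κ) p q :=
    Relation.ReflTransGen.single ⟨Or.inr hq, hpq⟩
  have bridge₂ : Relation.ReflTransGen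
      (fun a b : Site => b ∈ S ∪ T ∧ dist2 a b ≤ κ) q p :=
    Relation.ReflTransGen.single ⟨Or.inl hp, hqp⟩
  rcases hx with hx | hx <;> rcases hy with hy | hy
  · exact conn_mono Set.subset_union_left (hS x hx y hy)
  · exact ((conn_mono Set.subset_union_left (hS x hx p hp)).trans bridge₁).trans
      (conn_mono Set.subset_union_right (hT q hq y hy))
  · exact ((conn_mono Set.subset_union_right (hT x hx q hq)).trans bridge₂).trans
      (conn_mono Set.subset_union_left (hS p hp y hy))
  · exact conn_mono Set.subset_union_right (hT x hx y hy)

lemma step_conn {κ : ℝ} (hne : ∀ X ∈ U, X.Nonempty) (hκν : nu U ≤ κ) (hκ0 : 0 ≤ κ)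
    {A : Set Site} (h : Conn κ A) : Conn κ (step U A) := by
  have near : ∀ z ∈ step U A, ∃ z' ∈ A, dist2 z z' ≤ κ := by
    intro z hz
    rcases hz with hz | ⟨X, hX, hz⟩
    · exact ⟨z, hz, by rw [dist2_self]; exact hκ0⟩
    · obtain ⟨y₀, hy₀⟩ := hne X hX
      refine ⟨z + y₀, hz y₀ hy₀, ?_⟩
      have h1 : dist2 (z + 0) (z + y₀) = dist2 0 y₀ := dist2_add_left z 0 y₀
      rw [add_zero] at h1
      rw [h1]
      exact le_trans (dist2_le_nu hX (Finset.mem_insert_self _ _)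
        (Finset.mem_insert_of_mem hy₀)) hκν
  intro x hx y hy
  obtain ⟨x', hx', hdx⟩ := near x hx
  obtain ⟨y', hy', hdy⟩ := near y hy
  have mid := conn_mono (T := step U A) (subset_step' A) (h x' hx' y' hy')
  exact (Relation.ReflTransGen.head ⟨subset_step' A hx', hdx⟩ mid).tail
    ⟨hy, by rwa [dist2_comm] at hdy⟩

lemma bclosure_conn {κ : ℝ} (hne : ∀ X ∈ U, X.Nonempty) (hκν : nu U ≤ κ)
    (hκ0 : 0 ≤ κ) {A : Set Site} (h : Conn κ A) : Conn κ (bclosure U A) := by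
  have hiter : ∀ t, Conn κ (iter U A t) := by
    intro t; induction t with
    | zero => exact h
    | succ t ih => exact step_conn hne hκν hκ0 ih
  intro x hx y hy
  obtain ⟨t₁, ht₁⟩ := mem_bclosure'.mp hx
  obtain ⟨t₂, ht₂⟩ := mem_bclosure'.mp hy
  have hx' := iter_mono_t A (le_max_left t₁ t₂) ht₁
  have hy' := iter_mono_t A (le_max_right t₁ t₂) ht₂
  exact conn_mono (iter_subset_bclosure A _) (hiter _ x hx' y hy')

/-- Union of a list of finsets. -/
def unionList (l : List (Finset Site)) : Finset Site := l.foldr (· ∪ ·) ∅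

lemma mem_unionList {l : List (Finset Site)} {x : Site} :
    x ∈ unionList l ↔ ∃ P ∈ l, x ∈ P := by
  induction l with
  | nil => simp [unionList]
  | cons P t ih =>
    show x ∈ P ∪ unionList t ↔ _
    rw [Finset.mem_union, ih]
    simp

lemma unionList_erase {l : List (Finset Site)} {A : Finset Site} (h : A ∈ l) :
    unionList l = A ∪ unionList (l.erase A) := by
  classical
  induction l with
  | nil => cases h
  | cons B t ih =>
    by_cases hBA : B = A
    · subst hBA
      rw [List.erase_cons_head]
      rfl
    · have hA : A ∈ t := by
        rcases List.mem_cons.mp h with h' | h'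
        · exact absurd h'.symm hBA
        · exact h'
      rw [List.erase_cons_tail (by simpa using hBA)]
      show B ∪ unionList t = A ∪ (B ∪ unionList (t.erase A))
      rw [ih hA, Finset.union_left_comm]

lemma nodup_of_pd {l : List (Finset Site)} (hpd : l.Pairwise Disjoint)
    (hne : ∀ P ∈ l, P.Nonempty) : l.Nodup := by
  induction l with
  | nil => exact List.nodup_nil
  | cons P t ih =>
    rcases List.pairwise_cons.mp hpd with ⟨hhead, htail⟩
    refine List.nodup_cons.mpr ⟨?_, ih htail fun Q hQ => hne Q (List.mem_cons_of_mem _ hQ)⟩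
    intro hPt
    have hd := hhead P hPt
    have : P = ∅ := by simpa using hd
    exact ((hne P List.mem_cons_self).ne_empty) this

lemma pairwise_disjoint_forall {l : List (Finset Site)} (hpd : l.Pairwise Disjoint)
    {A B : Finset Site} (hA : A ∈ l) (hB : B ∈ l) (hAB : A ≠ B) : Disjoint A B :=
  by
    haveI : Std.Symm (α := Finset Site) Disjoint := ⟨fun _ _ h => h.symm⟩
    exact hpd.forall hA hB hAB

lemma far_contradiction {κ : ℝ} (hne : ∀ X ∈ U, X.Nonempty) (hκν : nu U ≤ κ)
    (hκ0 : 0 ≤ κ) {l : List (Finset Site)} {A₀ B₀ : Finset Site}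
    (hA₀ : A₀ ∈ l) (hB₀ : B₀ ∈ l) (hAB : A₀ ≠ B₀)
    (hA₀ne : A₀.Nonempty) (hB₀ne : B₀.Nonempty)
    {K : Finset Site} (hunion : unionList l = K)
    (hfar : ∀ A ∈ l, ∀ B ∈ l, A ≠ B → ∀ p ∈ bclosure U (↑A : Set Site),
      ∀ q ∈ bclosure U (↑B : Set Site), κ < dist2 p q)
    (hconn : Conn κ (bclosure U (↑K : Set Site))) : False := by
  classical
  set W : Set Site := {z | ∃ P ∈ l, z ∈ bclosure U (↑P : Set Site)} with hWdef
  have hWclosed : step U W ⊆ W := by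
    intro x hx
    rcases hx with hx | ⟨X, hX, hx⟩
    · exact hx
    · obtain ⟨y₀, hy₀⟩ := hne X hX
      obtain ⟨P₀, hP₀l, hP₀⟩ := hx y₀ hy₀
      have hall : ∀ y ∈ X, x + y ∈ bclosure U (↑P₀ : Set Site) := by
        intro y hy
        obtain ⟨P, hPl, hP⟩ := hx y hy
        by_cases hPP : P = P₀
        · subst hPP; exact hP
        · exfalso
          have hlt := hfar P hPl P₀ hP₀l hPP _ hP _ hP₀
          have hle : dist2 (x + y) (x + y₀) ≤ nu U := by
            rw [dist2_add_left]
            exact dist2_le_nu hX (Finset.mem_insert_of_mem hy)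
              (Finset.mem_insert_of_mem hy₀)
          linarith
      exact ⟨P₀, hP₀l, step_bclosure _ (Or.inr ⟨X, hX, hall⟩)⟩
  have hKW : bclosure U (↑K : Set Site) ⊆ W := by
    apply bclosure_subset_of_closed _ hWclosed
    intro x hx
    obtain ⟨P, hPl, hxP⟩ := mem_unionList.mp (hunion ▸ (Finset.mem_coe.mp hx))
    exact ⟨P, hPl, subset_bclosure' _ (Finset.mem_coe.mpr hxP)⟩
  have hsub : ∀ P ∈ l, (↑P : Set Site) ⊆ (↑K : Set Site) := by
    intro P hPl x hx
    exact Finset.mem_coe.mpr (hunion ▸ mem_unionList.mpr ⟨P, hPl, Finset.mem_coe.mp hx⟩)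
  obtain ⟨p, hp⟩ := hA₀ne
  obtain ⟨q, hq⟩ := hB₀ne
  have hpA : p ∈ bclosure U (↑A₀ : Set Site) := subset_bclosure' _ (Finset.mem_coe.mpr hp)
  have hqB : q ∈ bclosure U (↑B₀ : Set Site) := subset_bclosure' _ (Finset.mem_coe.mpr hq)
  have hpK : p ∈ bclosure U (↑K : Set Site) := bclosure_mono' (hsub A₀ hA₀) hpA
  have hqK : q ∈ bclosure U (↑K : Set Site) := bclosure_mono' (hsub B₀ hB₀) hqB
  have hpath := hconn p hpK q hqK
  have hinv : ∀ z, Relation.ReflTransGen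
      (fun a b : Site => b ∈ bclosure U (↑K : Set Site) ∧ dist2 a b ≤ κ) p z →
      z ∈ bclosure U (↑A₀ : Set Site) := by
    intro z hz
    induction hz with
    | refl => exact hpA
    | tail hab hR ih =>
      obtain ⟨hcK, hd⟩ := hR
      obtain ⟨P, hPl, hcP⟩ := hKW hcK
      by_cases hPA : P = A₀
      · subst hPA; exact hcP
      · exfalso
        have hlt := hfar P hPl A₀ hA₀ hPA _ hcP _ ih
        rw [dist2_comm] at hlt
        linarith
  have hqA := hinv q hpath
  have hfin := hfar B₀ hB₀ A₀ hA₀ (Ne.symm hAB) q hqB q hqA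
  rw [dist2_self] at hfin
  linarith

lemma alg (hne : ∀ X ∈ U, X.Nonempty) {κ : ℝ} (hκν : nu U ≤ κ) (hκ0 : 0 ≤ κ) :
    ∀ (n : ℕ) (l : List (Finset Site)), l.length = n + 2 →
    l.Pairwise Disjoint → (∀ P ∈ l, P.Nonempty) →
    (∀ P ∈ l, Conn κ (bclosure U (↑P : Set Site))) →
    ∀ K : Finset Site, unionList l = K → Conn κ (bclosure U (↑K : Set Site)) →
    ∃ K₁ K₂ : Finset Site, K₁.Nonempty ∧ K₂.Nonempty ∧ Disjoint K₁ K₂ ∧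
      K₁ ∪ K₂ = K ∧ Conn κ (bclosure U (↑K₁ : Set Site)) ∧
      Conn κ (bclosure U (↑K₂ : Set Site)) ∧
      Conn κ (bclosure U (↑K₁ : Set Site) ∪ bclosure U (↑K₂ : Set Site)) := by
  classical
  intro n
  induction n with
  | zero =>
    intro l hlen hpd hlne hlconn K hunion hconn
    obtain ⟨P, Q, rfl⟩ := List.length_eq_two.mp (by simpa using hlen)
    have hPQdisj : Disjoint P Q := (List.pairwise_cons.mp hpd).1 Q (by simp)
    have hPne : P.Nonempty := hlne P (by simp)
    have hQne : Q.Nonempty := hlne Q (by simp)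
    have hPQ : P ≠ Q := by
      rintro rfl
      exact hPne.ne_empty (by simpa using hPQdisj)
    have hPconn := hlconn P (by simp)
    have hQconn := hlconn Q (by simp)
    have hKPQ : P ∪ Q = K := by
      rw [← hunion]
      show P ∪ Q = P ∪ (Q ∪ ∅)
      rw [Finset.union_empty]
    by_cases hclose : ∃ p ∈ bclosure U (↑P : Set Site), ∃ q ∈ bclosure U (↑Q : Set Site),
        dist2 p q ≤ κ
    · obtain ⟨p, hp, q, hq, hpq⟩ := hclose
      exact ⟨P, Q, hPne, hQne, hPQdisj, hKPQ, hPconn, hQconn,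
        conn_union_of_close hPconn hQconn hp hq hpq⟩
    · exfalso
      push_neg at hclose
      refine far_contradiction hne hκν hκ0 (l := [P, Q]) (by simp) (by simp) hPQ hPne hQne
        hunion ?_ hconn
      intro A hA B hB hAB pp hpp qq hqq
      simp only [List.mem_cons, List.mem_singleton, List.not_mem_nil, or_false] at hA hB
      rcases hA with rfl | rfl <;> rcases hB with rfl | rfl
      · exact absurd rfl hAB
      · exact hclose pp hpp qq hqq
      · rw [dist2_comm]
        exact hclose qq hqq pp hpp
      · exact absurd rfl hAB
  | succ n ih =>
    intro l hlen hpd hlne hlconn K hunion hconn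
    by_cases hclose : ∃ A ∈ l, ∃ B ∈ l, A ≠ B ∧ ∃ p ∈ bclosure U (↑A : Set Site),
        ∃ q ∈ bclosure U (↑B : Set Site), dist2 p q ≤ κ
    · obtain ⟨A, hAl, B, hBl, hAB, p, hp, q, hq, hpq⟩ := hclose
      have hnodup := nodup_of_pd hpd hlne
      set rest := (l.erase A).erase B with hrest
      have hBeA : B ∈ l.erase A := (List.Nodup.mem_erase_iff hnodup).mpr ⟨Ne.symm hAB, hBl⟩
      have hmemrest : ∀ R ∈ rest, R ∈ l ∧ R ≠ A ∧ R ≠ B := by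
        intro R hR
        rw [hrest] at hR
        obtain ⟨hRB, hR'⟩ := (List.Nodup.mem_erase_iff (hnodup.erase A)).mp hR
        obtain ⟨hRA, hRl⟩ := (List.Nodup.mem_erase_iff hnodup).mp hR'
        exact ⟨hRl, hRA, hRB⟩
      have hunion' : unionList ((A ∪ B) :: rest) = K := by
        have e1 : unionList l = A ∪ unionList (l.erase A) := unionList_erase hAl
        have e2 : unionList (l.erase A) = B ∪ unionList rest := unionList_erase hBeA
        show (A ∪ B) ∪ unionList rest = K
        rw [← hunion, e1, e2, Finset.union_assoc]
      have hlen' : ((A ∪ B) :: rest).length = n + 2 := by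
        rw [List.length_cons, hrest, List.length_erase_of_mem hBeA,
          List.length_erase_of_mem hAl, hlen]
        omega
      have hpd' : ((A ∪ B) :: rest).Pairwise Disjoint := by
        refine List.pairwise_cons.mpr ⟨?_, ?_⟩
        · intro R hR
          obtain ⟨hRl, hRA, hRB⟩ := hmemrest R hR
          have d1 : Disjoint A R := pairwise_disjoint_forall hpd hAl hRl (Ne.symm hRA)
          have d2 : Disjoint B R := pairwise_disjoint_forall hpd hBl hRl (Ne.symm hRB)
          exact Finset.disjoint_union_left.mpr ⟨d1, d2⟩
        · exact hpd.sublist (List.erase_sublist.trans List.erase_sublist)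
      have hlne' : ∀ P ∈ (A ∪ B) :: rest, P.Nonempty := by
        intro P hP
        rcases List.mem_cons.mp hP with rfl | hP
        · exact (hlne A hAl).mono Finset.subset_union_left
        · exact hlne P (hmemrest P hP).1
      have hlconn' : ∀ P ∈ (A ∪ B) :: rest, Conn κ (bclosure U (↑P : Set Site)) := by
        intro P hP
        rcases List.mem_cons.mp hP with rfl | hP
        · have h1 : Conn κ (bclosure U (↑A : Set Site) ∪ bclosure U (↑B : Set Site)) :=
            conn_union_of_close (hlconn A hAl) (hlconn B hBl) hp hq hpq
          have h2 := bclosure_conn hne hκν hκ0 h1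
          rw [bclosure_union_closures] at h2
          rwa [Finset.coe_union]
        · exact hlconn P (hmemrest P hP).1
      exact ih ((A ∪ B) :: rest) hlen' hpd' hlne' hlconn' K hunion' hconn
    · exfalso
      push_neg at hclose
      match l, hlen with
      | P :: Q :: t, hlen =>
      have hPQdisj : Disjoint P Q := (List.pairwise_cons.mp hpd).1 Q (by simp)
      have hPne : P.Nonempty := hlne P (by simp)
      have hQne : Q.Nonempty := hlne Q (by simp)
      have hPQ : P ≠ Q := by
        rintro rfl
        exact hPne.ne_empty (by simpa using hPQdisj)
      exact far_contradiction hne hκν hκ0 (by simp : P ∈ P :: Q :: t) (by simp) hPQ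
        hPne hQne hunion hclose hconn

end SplitProof


/-- **Lemma 5.12 (splitting strongly connected closures).**  If `K` is a finite set with
`|K| ≥ 2` whose closure `[K]` is strongly connected, then `K` can be partitioned into
nonempty sets `K₁, K₂` such that `[K₁]`, `[K₂]` and `[K₁] ∪ [K₂]` are all strongly
connected. -/
theorem span_penultimate_split
    (U : Finset (Finset Site)) (hU : ∀ X ∈ U, (0 : Site) ∉ X)
    (hcrit : Critical U) (hunbal : ¬ BalancedCond U)
    (K : Finset Site) (hK : 2 ≤ K.card)
    (hconn : Conn (3 * nu U) (bclosure U ↑K)) :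
    ∃ K₁ K₂ : Finset Site, K₁.Nonempty ∧ K₂.Nonempty ∧ Disjoint K₁ K₂ ∧
      K₁ ∪ K₂ = K ∧
      Conn (3 * nu U) (bclosure U ↑K₁) ∧ Conn (3 * nu U) (bclosure U ↑K₂) ∧
      Conn (3 * nu U) (bclosure U ↑K₁ ∪ bclosure U ↑K₂) := by
  classical
  set κ := 3 * nu U with hκdef
  have hne : ∀ X ∈ U, X.Nonempty := by
    intro X hX
    by_contra hXne
    rw [Finset.not_nonempty_iff_eq_empty] at hXne
    obtain ⟨u, hu⟩ := hcrit.2 (1, 0) (by simp [unitVec])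
    have hstable : bclosure U (halfPlane u) = halfPlane u := hu.1.2
    have h0 : (0 : Site) ∈ step U (halfPlane u) := Or.inr ⟨X, hX, by simp [hXne]⟩
    have hmem : (0 : Site) ∈ bclosure U (halfPlane u) := iter_subset_bclosure _ 1 h0
    rw [hstable] at hmem
    simp [halfPlane, ip] at hmem
  have hν0 : 0 ≤ nu U := nu_nonneg U
  have hκν : nu U ≤ κ := by rw [hκdef]; linarith
  have hκ0 : 0 ≤ κ := by rw [hκdef]; linarith
  have hlen : (K.toList.map fun x => ({x} : Finset Site)).length = (K.card - 2) + 2 := by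
    rw [List.length_map, Finset.length_toList]
    omega
  have hpd : (K.toList.map fun x => ({x} : Finset Site)).Pairwise Disjoint := by
    rw [List.pairwise_map]
    refine K.nodup_toList.imp ?_
    intro a b hab
    simpa using hab
  have hlne : ∀ P ∈ K.toList.map fun x => ({x} : Finset Site), P.Nonempty := by
    intro P hP
    obtain ⟨x, _, rfl⟩ := List.mem_map.mp hP
    exact Finset.singleton_nonempty x
  have hlconn : ∀ P ∈ K.toList.map fun x => ({x} : Finset Site),
      Conn κ (bclosure U (↑P : Set Site)) := by
    intro P hP
    obtain ⟨x, _, rfl⟩ := List.mem_map.mp hP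
    apply bclosure_conn hne hκν hκ0
    intro a ha b hb
    simp only [Finset.coe_singleton, Set.mem_singleton_iff] at ha hb
    subst ha; subst hb
    exact Relation.ReflTransGen.refl
  have hunion : unionList (K.toList.map fun x => ({x} : Finset Site)) = K := by
    have key : ∀ L : List Site, unionList (L.map fun x => ({x} : Finset Site)) = L.toFinset := by
      intro L
      induction L with
      | nil => simp [unionList]
      | cons a t iht =>
        show {a} ∪ unionList (t.map fun x => ({x} : Finset Site)) = (a :: t).toFinset
        rw [iht, List.toFinset_cons, Finset.insert_eq]
    rw [key, Finset.toList_toFinset]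
  exact alg hne hκν hκ0 (K.card - 2) _ hlen hpd hlne hlconn K hunion hconn


end BP
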